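/- Let u be a real-valued harmonic function on ℝ² ∖ {0}, i.e. u is C² on ℝ² ∖ {0} and ∂²u/∂x₁² + ∂²u/∂x₂² = 0 there. Suppose there exists a constant C > 0 and an exponent μ ∈ (0,1) such that |u(x)| ≤ C·|x|^{−μ} for every x ∈ ℝ² ∖ {0}, where |x| is the Euclidean norm. Then u is identically zero on ℝ² ∖ {0}. -/

import Mathlib

open Complex Set Metric intervalIntegral
open scoped Interval

noncomputable section
namespace Stmt6Aux

/-- The "complex gradient" `u_x - i u_y` of a real-valued function on `ℂ`. -/
def cd (U : ℂ → ℝ) (z : ℂ) : ℂ :=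
  ((fderiv ℝ U z 1 : ℝ) : ℂ) - ((fderiv ℝ U z Complex.I : ℝ) : ℂ) * Complex.I

lemma fderiv_apply_eq (U : ℂ → ℝ) (z w : ℂ) :
    fderiv ℝ U z w = ((cd U z) * w).re := by
  have hw : w = w.re • (1 : ℂ) + w.im • Complex.I := by
    simp [real_smul]
  rw [hw, map_add, map_smul, map_smul]
  simp [cd, Complex.mul_re]
  ring

/-- open square centered at z₀ with half-side δ -/
def sq (z₀ : ℂ) (δ : ℝ) : Set ℂ := {z | |z.re - z₀.re| < δ ∧ |z.im - z₀.im| < δ}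

lemma sq_eq (z₀ : ℂ) (δ : ℝ) : sq z₀ δ = Complex.reLm ⁻¹' (Ioo (z₀.re - δ) (z₀.re + δ)) ∩
    Complex.imLm ⁻¹' (Ioo (z₀.im - δ) (z₀.im + δ)) := by
  ext z
  simp only [sq, mem_setOf_eq, mem_inter_iff, mem_preimage, mem_Ioo, abs_lt, Complex.reLm_coe,
    Complex.imLm_coe]
  constructor <;> rintro ⟨⟨h1, h2⟩, h3, h4⟩ <;> exact ⟨⟨by linarith, by linarith⟩, by linarith, by linarith⟩

lemma isOpen_sq (z₀ : ℂ) (δ : ℝ) : IsOpen (sq z₀ δ) := by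
  rw [sq_eq]
  exact (isOpen_Ioo.preimage Complex.continuous_re).inter (isOpen_Ioo.preimage Complex.continuous_im)

lemma convex_sq (z₀ : ℂ) (δ : ℝ) : Convex ℝ (sq z₀ δ) := by
  rw [sq_eq]
  exact ((convex_Ioo _ _).linear_preimage _).inter ((convex_Ioo _ _).linear_preimage _)

lemma ball_subset_sq (z₀ : ℂ) (δ : ℝ) : ball z₀ δ ⊆ sq z₀ δ := by
  intro z hz
  rw [mem_ball, Complex.dist_eq] at hz
  exact ⟨lt_of_le_of_lt (by simpa using Complex.abs_re_le_norm (z - z₀)) hz,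
    lt_of_le_of_lt (by simpa using Complex.abs_im_le_norm (z - z₀)) hz⟩

lemma sq_subset_ball (z₀ : ℂ) (δ : ℝ) : sq z₀ δ ⊆ ball z₀ (2 * δ) := by
  intro z hz
  rw [mem_ball, Complex.dist_eq]
  calc ‖z - z₀‖ ≤ |(z - z₀).re| + |(z - z₀).im| :=
        Complex.norm_le_abs_re_add_abs_im _
    _ < 2 * δ := by
        have h1 := hz.1; have h2 := hz.2
        simp only [Complex.sub_re, Complex.sub_im] at *
        linarith


lemma abs_sub_lt_of_mem_uIcc {p q c δ : ℝ} (hp : |p - c| < δ) (hq : |q - c| < δ)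
    {s : ℝ} (hs : s ∈ uIcc p q) : |s - c| < δ := by
  rw [Set.mem_uIcc] at hs
  rw [abs_lt] at *
  rcases hs with ⟨h1, h2⟩ | ⟨h1, h2⟩ <;> constructor <;> linarith

lemma exists_primitive {f : ℂ → ℂ} {z₀ : ℂ} {δ : ℝ} (hδ : 0 < δ)
    (hf : DifferentiableOn ℂ f (sq z₀ δ)) :
    ∃ p : ℂ → ℂ, ∀ z ∈ sq z₀ δ, HasDerivAt p (f z) z := by
  have hfc : ContinuousOn f (sq z₀ δ) := hf.continuousOn
  set a := z₀.re with ha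
  set b := z₀.im with hb
  have hbb : |b - b| < δ := by simpa using hδ
  -- membership helpers
  have memh : ∀ {x x' y : ℝ}, |x - a| < δ → |x' - a| < δ → |y - b| < δ →
      ∀ s ∈ uIcc x x', ((s : ℂ) + (y : ℂ) * Complex.I) ∈ sq z₀ δ := by
    intro x x' y hx hx' hy s hs
    exact ⟨by simpa using abs_sub_lt_of_mem_uIcc hx hx' hs, by simpa using hy⟩
  have memv : ∀ {x y y' : ℝ}, |x - a| < δ → |y - b| < δ → |y' - b| < δ →
      ∀ t ∈ uIcc y y', ((x : ℂ) + (t : ℂ) * Complex.I) ∈ sq z₀ δ := by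
    intro x y y' hx hy hy' t ht
    exact ⟨by simpa using hx, by simpa using abs_sub_lt_of_mem_uIcc hy hy' ht⟩
  -- integrability helpers
  have inth : ∀ {x x' y : ℝ}, |x - a| < δ → |x' - a| < δ → |y - b| < δ →
      IntervalIntegrable (fun s : ℝ => f ((s : ℂ) + (y : ℂ) * Complex.I))
        MeasureTheory.volume x x' := by
    intro x x' y hx hx' hy
    apply ContinuousOn.intervalIntegrable
    exact hfc.comp (Continuous.continuousOn (by continuity)) (fun s hs => memh hx hx' hy s hs)
  have intv : ∀ {x y y' : ℝ}, |x - a| < δ → |y - b| < δ → |y' - b| < δ →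
      IntervalIntegrable (fun t : ℝ => f ((x : ℂ) + (t : ℂ) * Complex.I))
        MeasureTheory.volume y y' := by
    intro x y y' hx hy hy'
    apply ContinuousOn.intervalIntegrable
    exact hfc.comp (Continuous.continuousOn (by continuity)) (fun t ht => memv hx hy hy' t ht)
  refine ⟨fun z => (∫ s in a..z.re, f ((s : ℂ) + (b : ℂ) * Complex.I)) +
      Complex.I * ∫ t in b..z.im, f ((z.re : ℂ) + (t : ℂ) * Complex.I), ?_⟩
  intro z hz
  obtain ⟨hzx, hzy⟩ := hz
  set x := z.re with hx
  set y := z.im with hy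
  rw [hasDerivAt_iff_isLittleO, Asymptotics.isLittleO_iff]
  intro c hc
  -- continuity at z
  have hfz : ContinuousAt f z := hfc.continuousAt ((isOpen_sq z₀ δ).mem_nhds ⟨hzx, hzy⟩)
  obtain ⟨r, hr, hball⟩ : ∃ r > 0, ∀ ζ, dist ζ z < r → ‖f ζ - f z‖ ≤ c / 2 := by
    have := Metric.continuousAt_iff.1 hfz (c/2) (by linarith)
    obtain ⟨ρ, hρ, h⟩ := this
    exact ⟨ρ, hρ, fun ζ hζ => le_of_lt (by simpa [dist_eq_norm] using h hζ)⟩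
  have hev : ∀ᶠ w in nhds z, w ∈ sq z₀ δ ∧ dist w z < r / 2 := by
    filter_upwards [(isOpen_sq z₀ δ).mem_nhds ⟨hzx, hzy⟩, Metric.ball_mem_nhds z (by linarith : (0:ℝ) < r/2)] with w h1 h2
    exact ⟨h1, h2⟩
  filter_upwards [hev] with w hw
  obtain ⟨⟨hwx, hwy⟩, hwz⟩ := hw
  set x' := w.re with hx'
  set y' := w.im with hy'
  -- the rectangle Cauchy identity
  have hrect : DifferentiableOn ℂ f ([[x, x']] ×ℂ [[b, y]]) := by
    apply hf.mono
    intro ζ hζ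
    rw [Complex.mem_reProdIm] at hζ
    exact ⟨abs_sub_lt_of_mem_uIcc hzx hwx hζ.1, abs_sub_lt_of_mem_uIcc hbb hzy hζ.2⟩
  have h2raw := Complex.integral_boundary_rect_eq_zero_of_differentiableOn f
      ((x : ℂ) + (b : ℂ) * Complex.I) ((x' : ℂ) + (y : ℂ) * Complex.I) (by simpa using hrect)
  simp only [Complex.add_re, Complex.ofReal_re, Complex.mul_re, Complex.I_re, Complex.I_im,
    Complex.ofReal_im, Complex.add_im, Complex.mul_im, smul_eq_mul] at h2raw
  norm_num at h2raw
  have haa : |a - a| < δ := by simpa using hδ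
  have h1 : (∫ s in a..x', f ((s:ℂ) + (b:ℂ) * Complex.I)) -
      (∫ s in a..x, f ((s:ℂ) + (b:ℂ) * Complex.I)) =
      ∫ s in x..x', f ((s:ℂ) + (b:ℂ) * Complex.I) :=
    integral_interval_sub_left (inth haa hwx hbb) (inth haa hzx hbb)
  have h3 : (∫ t in b..y, f ((x':ℂ) + (t:ℂ) * Complex.I)) +
      (∫ t in y..y', f ((x':ℂ) + (t:ℂ) * Complex.I)) =
      ∫ t in b..y', f ((x':ℂ) + (t:ℂ) * Complex.I) :=
    integral_add_adjacent_intervals (intv hwx hbb hzy) (intv hwx hzy hwy)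
  rw [← hx, ← hy]
  have hkey : ((∫ s in a..x', f ((s:ℂ) + (b:ℂ) * Complex.I)) +
        Complex.I * ∫ t in b..y', f ((x':ℂ) + (t:ℂ) * Complex.I)) -
      ((∫ s in a..x, f ((s:ℂ) + (b:ℂ) * Complex.I)) +
        Complex.I * ∫ t in b..y, f ((x:ℂ) + (t:ℂ) * Complex.I)) =
      (∫ s in x..x', f ((s:ℂ) + (y:ℂ) * Complex.I)) +
        Complex.I * ∫ t in y..y', f ((x':ℂ) + (t:ℂ) * Complex.I) := by
    linear_combination h1 + h2raw - Complex.I * h3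
  have hwz_eq : w - z = ((x' - x : ℝ) : ℂ) + ((y' - y : ℝ) : ℂ) * Complex.I := by
    apply Complex.ext <;> simp [hx, hy, hx', hy']
  have E1 : ∫ s in x..x', (f ((s:ℂ) + (y:ℂ) * Complex.I) - f z) =
      (∫ s in x..x', f ((s:ℂ) + (y:ℂ) * Complex.I)) - ((x' - x : ℝ) : ℂ) * f z := by
    rw [integral_sub (inth hzx hwx hzy) intervalIntegrable_const, integral_const]
    rw [Complex.real_smul]
  have E2 : ∫ t in y..y', (f ((x':ℂ) + (t:ℂ) * Complex.I) - f z) =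
      (∫ t in y..y', f ((x':ℂ) + (t:ℂ) * Complex.I)) - ((y' - y : ℝ) : ℂ) * f z := by
    rw [integral_sub (intv hwx hzy hwy) intervalIntegrable_const, integral_const]
    rw [Complex.real_smul]
  have hT : ((∫ s in a..x', f ((s:ℂ) + (b:ℂ) * Complex.I)) +
        Complex.I * ∫ t in b..y', f ((x':ℂ) + (t:ℂ) * Complex.I)) -
      ((∫ s in a..x, f ((s:ℂ) + (b:ℂ) * Complex.I)) +
        Complex.I * ∫ t in b..y, f ((x:ℂ) + (t:ℂ) * Complex.I)) - (w - z) • f z =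
      (∫ s in x..x', (f ((s:ℂ) + (y:ℂ) * Complex.I) - f z)) +
        Complex.I * ∫ t in y..y', (f ((x':ℂ) + (t:ℂ) * Complex.I) - f z) := by
    rw [E1, E2, smul_eq_mul, hwz_eq]
    linear_combination hkey
  rw [hT]
  -- norm estimates
  have hzeq : z = (x:ℂ) + (y:ℂ) * Complex.I := (Complex.re_add_im z).symm
  have hrex : |x' - x| ≤ ‖w - z‖ := by
    simpa using Complex.abs_re_le_norm (w - z)
  have himy : |y' - y| ≤ ‖w - z‖ := by
    simpa using Complex.abs_im_le_norm (w - z)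
  have hwzn : ‖w - z‖ < r / 2 := by rwa [Complex.dist_eq] at hwz
  have hb1 : ‖∫ s in x..x', (f ((s:ℂ) + (y:ℂ) * Complex.I) - f z)‖ ≤ (c/2) * |x' - x| := by
    apply intervalIntegral.norm_integral_le_of_norm_le_const
    intro s hs
    have hs' : s ∈ uIcc x x' := Set.uIoc_subset_uIcc hs
    apply hball
    rw [Complex.dist_eq, hzeq]
    have : ((s:ℂ) + (y:ℂ) * Complex.I) - ((x:ℂ) + (y:ℂ) * Complex.I) = ((s - x : ℝ) : ℂ) := by
      push_cast; ring
    rw [this, Complex.norm_real, Real.norm_eq_abs]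
    have h5 : |s - x| ≤ |x' - x| := by
      rw [Set.mem_uIcc] at hs'
      have := le_abs_self (x' - x); have := neg_abs_le (x' - x)
      rw [abs_le]; rcases hs' with ⟨u1, u2⟩ | ⟨u1, u2⟩ <;> constructor <;> linarith
    calc |s - x| ≤ |x' - x| := h5
      _ ≤ ‖w - z‖ := hrex
      _ < r / 2 := hwzn
      _ < r := by linarith
  have hb2 : ‖∫ t in y..y', (f ((x':ℂ) + (t:ℂ) * Complex.I) - f z)‖ ≤ (c/2) * |y' - y| := by
    apply intervalIntegral.norm_integral_le_of_norm_le_const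
    intro t ht
    have ht' : t ∈ uIcc y y' := Set.uIoc_subset_uIcc ht
    apply hball
    rw [Complex.dist_eq, hzeq]
    have : ((x':ℂ) + (t:ℂ) * Complex.I) - ((x:ℂ) + (y:ℂ) * Complex.I) =
        ((x' - x : ℝ) : ℂ) + ((t - y : ℝ) : ℂ) * Complex.I := by push_cast; ring
    rw [this]
    have h5 : |t - y| ≤ |y' - y| := by
      rw [Set.mem_uIcc] at ht'
      have := le_abs_self (y' - y); have := neg_abs_le (y' - y)
      rw [abs_le]; rcases ht' with ⟨u1, u2⟩ | ⟨u1, u2⟩ <;> constructor <;> linarith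
    calc ‖(((x' - x : ℝ) : ℂ) + ((t - y : ℝ) : ℂ) * Complex.I)‖
        ≤ |x' - x| + |t - y| := by
          simpa using Complex.norm_le_abs_re_add_abs_im (((x' - x : ℝ) : ℂ) + ((t - y : ℝ) : ℂ) * Complex.I)
      _ ≤ ‖w - z‖ + ‖w - z‖ := add_le_add hrex (h5.trans himy)
      _ < r := by linarith
  calc ‖(∫ s in x..x', (f ((s:ℂ) + (y:ℂ) * Complex.I) - f z)) +
        Complex.I * ∫ t in y..y', (f ((x':ℂ) + (t:ℂ) * Complex.I) - f z)‖
      ≤ ‖∫ s in x..x', (f ((s:ℂ) + (y:ℂ) * Complex.I) - f z)‖ +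
        ‖Complex.I * ∫ t in y..y', (f ((x':ℂ) + (t:ℂ) * Complex.I) - f z)‖ := norm_add_le _ _
    _ = ‖∫ s in x..x', (f ((s:ℂ) + (y:ℂ) * Complex.I) - f z)‖ +
        ‖∫ t in y..y', (f ((x':ℂ) + (t:ℂ) * Complex.I) - f z)‖ := by
          rw [norm_mul, Complex.norm_I, one_mul]
    _ ≤ (c/2) * |x' - x| + (c/2) * |y' - y| := add_le_add hb1 hb2
    _ ≤ (c/2) * ‖w - z‖ + (c/2) * ‖w - z‖ := by
          have : (0:ℝ) ≤ c/2 := by linarith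
          exact add_le_add (mul_le_mul_of_nonneg_left hrex this) (mul_le_mul_of_nonneg_left himy this)
    _ = c * ‖w - z‖ := by ring


lemma cd_differentiableOn {U : ℂ → ℝ} {Ω : Set ℂ} (hΩ : IsOpen Ω) (hU : ContDiffOn ℝ 2 U Ω)
    (hharm : ∀ z ∈ Ω, fderiv ℝ (fderiv ℝ U) z 1 1 +
      fderiv ℝ (fderiv ℝ U) z Complex.I Complex.I = 0) :
    DifferentiableOn ℂ (cd U) Ω := by
  intro z hz
  apply DifferentiableAt.differentiableWithinAt
  have hU2 : ContDiffAt ℝ 2 U z := (hU z hz).contDiffAt (hΩ.mem_nhds hz)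
  have hsym := hU2.isSymmSndFDerivAt (by simp)
  have hdd : ContDiffAt ℝ 1 (fderiv ℝ U) z := hU2.fderiv_right (by norm_num)
  have hB : HasFDerivAt (fderiv ℝ U) (fderiv ℝ (fderiv ℝ U) z) z :=
    (hdd.differentiableAt one_ne_zero).hasFDerivAt
  set B := fderiv ℝ (fderiv ℝ U) z with hBdef
  have hux : HasFDerivAt (fun w => fderiv ℝ U w 1)
      ((ContinuousLinearMap.apply ℝ ℝ (1 : ℂ)).comp B) z :=
    (ContinuousLinearMap.apply ℝ ℝ (1 : ℂ)).hasFDerivAt.comp z hB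
  have huy : HasFDerivAt (fun w => fderiv ℝ U w Complex.I)
      ((ContinuousLinearMap.apply ℝ ℝ (Complex.I)).comp B) z :=
    (ContinuousLinearMap.apply ℝ ℝ Complex.I).hasFDerivAt.comp z hB
  have h1 : HasFDerivAt (fun w => ((fderiv ℝ U w 1 : ℝ) : ℂ))
      (Complex.ofRealCLM.comp ((ContinuousLinearMap.apply ℝ ℝ (1 : ℂ)).comp B)) z :=
    Complex.ofRealCLM.hasFDerivAt.comp z hux
  have h2 : HasFDerivAt (fun w => ((fderiv ℝ U w Complex.I : ℝ) : ℂ))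
      (Complex.ofRealCLM.comp ((ContinuousLinearMap.apply ℝ ℝ Complex.I).comp B)) z :=
    Complex.ofRealCLM.hasFDerivAt.comp z huy
  have h3 := h1.sub (h2.mul_const Complex.I)
  set v : ℂ := ((B 1 1 : ℝ) : ℂ) - ((B 1 Complex.I : ℝ) : ℂ) * Complex.I with hv
  have harm := hharm z hz
  have hsymm : B Complex.I 1 = B 1 Complex.I := hsym.eq Complex.I 1
  have hBII : B Complex.I Complex.I = - B 1 1 := by linarith
  have hEq : (((1 : ℂ →L[ℂ] ℂ).smulRight v).restrictScalars ℝ : ℂ →L[ℝ] ℂ)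
      = Complex.ofRealCLM.comp ((ContinuousLinearMap.apply ℝ ℝ (1:ℂ)).comp B) -
        Complex.I • Complex.ofRealCLM.comp ((ContinuousLinearMap.apply ℝ ℝ Complex.I).comp B) := by
    ext w
    have hw : w = w.re • (1 : ℂ) + w.im • Complex.I := by simp [real_smul]
    have hBw : B w = w.re • B 1 + w.im • B Complex.I := by
      conv_lhs => rw [hw]
      rw [map_add, map_smul, map_smul]
    simp only [ContinuousLinearMap.coe_restrictScalars', ContinuousLinearMap.coe_comp',
      Function.comp_apply, ContinuousLinearMap.coe_sub', Pi.sub_apply,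
      ContinuousLinearMap.smulRight_apply, ContinuousLinearMap.one_apply,
      ContinuousLinearMap.apply_apply, Complex.ofRealCLM_apply, smul_eq_mul,
      ContinuousLinearMap.coe_smul', Pi.smul_apply]
    rw [hBw]
    simp only [ContinuousLinearMap.add_apply, ContinuousLinearMap.coe_smul',
      Pi.smul_apply, smul_eq_mul]
    rw [hsymm, hBII, hv]
    apply Complex.ext <;>
      simp [Complex.mul_re, Complex.mul_im, Complex.add_re, Complex.add_im] <;> ring
  exact (hasFDerivAt_of_restrictScalars ℝ h3 hEq).differentiableAt

lemma re_primitive_sub_const {U : ℂ → ℝ} {p : ℂ → ℂ} {T : Set ℂ} (hT : Convex ℝ T)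
    (hTo : IsOpen T) (hU : ∀ z ∈ T, DifferentiableAt ℝ U z)
    (hp : ∀ z ∈ T, HasDerivAt p (cd U z) z) {z w : ℂ} (hz : z ∈ T) (hw : w ∈ T) :
    (p z).re - U z = (p w).re - U w := by
  have key : ∀ ζ ∈ T, HasFDerivAt (fun z => (p z).re - U z) (0 : ℂ →L[ℝ] ℝ) ζ := by
    intro ζ hζ
    have h1 : HasFDerivAt (fun z => (p z).re)
        (Complex.reCLM.comp ((ContinuousLinearMap.smulRight (1 : ℂ →L[ℂ] ℂ)
          (cd U ζ)).restrictScalars ℝ)) ζ :=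
      Complex.reCLM.hasFDerivAt.comp ζ ((hp ζ hζ).hasFDerivAt.restrictScalars ℝ)
    have h3 := h1.sub (hU ζ hζ).hasFDerivAt
    refine h3.congr_fderiv ?_
    ext w
    simp only [ContinuousLinearMap.zero_apply, ContinuousLinearMap.coe_sub', Pi.sub_apply,
      ContinuousLinearMap.coe_comp', Function.comp_apply,
      ContinuousLinearMap.coe_restrictScalars', ContinuousLinearMap.smulRight_apply,
      ContinuousLinearMap.one_apply, Complex.reCLM_apply, smul_eq_mul]
    rw [fderiv_apply_eq U ζ w, mul_comm]
    ring
  have hdiff : DifferentiableOn ℝ (fun z => (p z).re - U z) T :=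
    fun ζ hζ => ((key ζ hζ).differentiableAt).differentiableWithinAt
  have hzero : ∀ ζ ∈ T, fderivWithin ℝ (fun z => (p z).re - U z) T ζ = 0 := by
    intro ζ hζ
    rw [fderivWithin_of_isOpen hTo hζ]
    exact (key ζ hζ).fderiv
  exact hT.is_const_of_fderivWithin_eq_zero hdiff hzero hz hw

lemma borel_caratheodory {f p : ℂ → ℂ} {z₀ : ℂ} {δ M : ℝ} (hδ : 0 < δ) (hM : 0 ≤ M)
    (hp : ∀ z ∈ ball z₀ δ, HasDerivAt p (f z) z)
    (hRe : ∀ z ∈ ball z₀ δ, (p z).re - (p z₀).re ≤ 2 * M) :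
    ‖f z₀‖ ≤ (4 * M + 2) / δ := by
  set A : ℝ := 2 * M + 1 with hA
  have hApos : 0 < A := by positivity
  set q : ℂ → ℂ := fun z => p z - p z₀ with hq
  have hq0 : q z₀ = 0 := by simp [hq]
  have hqderiv : ∀ z ∈ ball z₀ δ, HasDerivAt q (f z) z :=
    fun z hz => (hp z hz).sub_const (p z₀)
  have hqre : ∀ z ∈ ball z₀ δ, (q z).re ≤ 2 * M := by
    intro z hz; simpa [hq] using hRe z hz
  have hlt : ∀ z ∈ ball z₀ δ, ‖q z‖ < ‖2 * (A:ℂ) - q z‖ := by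
    intro z hz
    have h1 : (q z).re ≤ 2 * M := hqre z hz
    apply lt_of_pow_lt_pow_left₀ 2 (norm_nonneg _)
    rw [Complex.sq_norm, Complex.sq_norm]
    simp only [Complex.normSq_apply, Complex.sub_re, Complex.sub_im, Complex.mul_re,
      Complex.mul_im, Complex.ofReal_re, Complex.ofReal_im]
    norm_num
    nlinarith [sq_nonneg ((q z).im)]
  have hne : ∀ z ∈ ball z₀ δ, 2 * (A:ℂ) - q z ≠ 0 := by
    intro z hz h0
    have h1 := hlt z hz
    rw [h0] at h1
    simp only [norm_zero] at h1
    exact absurd h1 (not_lt.mpr (norm_nonneg _))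
  set h : ℂ → ℂ := fun z => q z / (2 * (A:ℂ) - q z) with hh
  have hh0 : h z₀ = 0 := by simp [hh, hq0]
  have hdiff : DifferentiableOn ℂ h (ball z₀ δ) := by
    intro z hz
    exact (((hqderiv z hz).differentiableAt.div
      ((differentiableAt_const _).sub (hqderiv z hz).differentiableAt) (hne z hz))).differentiableWithinAt
  have hmaps : MapsTo h (ball z₀ δ) (ball (h z₀) 1) := by
    intro z hz
    rw [hh0, mem_ball, dist_zero_right]
    simp only [hh, norm_div]
    rw [div_lt_one (by simpa using
      (norm_nonneg (q z)).trans_lt (hlt z hz))]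
    simpa using hlt z hz
  have hderiv : HasDerivAt h (f z₀ / (2 * (A:ℂ))) z₀ := by
    have hd := ((hqderiv z₀ (mem_ball_self hδ)).div
      (((hasDerivAt_const z₀ (2*(A:ℂ))).sub (hqderiv z₀ (mem_ball_self hδ))))
      (hne z₀ (mem_ball_self hδ)))
    have hA0 : (2 * (A:ℂ)) ≠ 0 := by
      rw [Ne, mul_eq_zero]; push_neg
      exact ⟨two_ne_zero, by exact_mod_cast hApos.ne'⟩
    refine hd.congr_deriv ?_
    simp only [Pi.sub_apply, hq0, sub_zero, zero_mul]
    field_simp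
  have hsch := Complex.norm_deriv_le_div_of_mapsTo_ball hdiff (hmaps.mono_right ball_subset_closedBall) hδ
  rw [hderiv.deriv] at hsch
  rw [norm_div] at hsch
  have h2A : ‖(2 * (A:ℂ))‖ = 2 * A := by
    rw [norm_mul, Complex.norm_real, Real.norm_eq_abs, abs_of_pos hApos]
    norm_num
  rw [h2A] at hsch
  have : ‖f z₀‖ ≤ (2 * A) * (1 / δ) := by
    rw [div_le_div_iff₀ (by positivity) hδ] at hsch
    rw [mul_one_div, le_div_iff₀ hδ]
    linarith
  calc ‖f z₀‖ ≤ 2 * A * (1/δ) := this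
    _ = (4 * M + 2) / δ := by rw [hA]; ring


lemma cd_bound {U : ℂ → ℝ} {C μ : ℝ} (hC : 0 < C) (hμ0 : 0 < μ)
    (hU : ContDiffOn ℝ 2 U {z : ℂ | z ≠ 0})
    (hharm : ∀ z ∈ {z : ℂ | z ≠ 0}, fderiv ℝ (fderiv ℝ U) z 1 1 +
      fderiv ℝ (fderiv ℝ U) z Complex.I Complex.I = 0)
    (hb : ∀ z : ℂ, z ≠ 0 → |U z| ≤ C * ‖z‖ ^ (-μ)) :
    ∀ z : ℂ, z ≠ 0 → ‖cd U z‖ ≤ (4 * (C * (‖z‖ / 2) ^ (-μ)) + 2) / (‖z‖ / 4) := by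
  intro z₀ hz₀
  have hΩ : IsOpen {z : ℂ | z ≠ 0} := isOpen_ne
  have hn : 0 < ‖z₀‖ := norm_pos_iff.mpr hz₀
  set δ : ℝ := ‖z₀‖ / 4 with hδdef
  have hδ : 0 < δ := by positivity
  have hlow : ∀ z ∈ sq z₀ δ, ‖z₀‖ / 2 ≤ ‖z‖ := by
    intro z hz
    have h1 : ‖z - z₀‖ < 2 * δ := by
      have := sq_subset_ball z₀ δ hz
      rwa [mem_ball, dist_eq_norm] at this
    have h2 : ‖z₀‖ - ‖z - z₀‖ ≤ ‖z‖ := by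
      have := norm_sub_norm_le z₀ z
      rw [← norm_neg (z₀ - z)] at this
      simp only [neg_sub] at this
      linarith [norm_sub_norm_le z z₀]
    rw [hδdef] at h1
    linarith
  have hsub : sq z₀ δ ⊆ {z : ℂ | z ≠ 0} := by
    intro z hz
    have := hlow z hz
    simp only [mem_setOf_eq]
    intro h0
    rw [h0, norm_zero] at this
    linarith
  set M : ℝ := C * (‖z₀‖ / 2) ^ (-μ) with hM
  have hMpos : 0 ≤ M := by positivity
  have hUb : ∀ z ∈ sq z₀ δ, |U z| ≤ M := by
    intro z hz
    refine (hb z (hsub hz)).trans ?_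
    rw [hM]
    have := Real.rpow_le_rpow_of_nonpos (by positivity : (0:ℝ) < ‖z₀‖/2) (hlow z hz)
      (by linarith : -μ ≤ 0)
    exact mul_le_mul_of_nonneg_left this hC.le
  obtain ⟨p, hp⟩ := exists_primitive hδ ((cd_differentiableOn hΩ hU hharm).mono hsub)
  have hpball : ∀ z ∈ ball z₀ δ, HasDerivAt p (cd U z) z :=
    fun z hz => hp z (ball_subset_sq z₀ δ hz)
  have hUdiff : ∀ z ∈ sq z₀ δ, DifferentiableAt ℝ U z := by
    intro z hz
    have := (hU.differentiableOn (by norm_num)) z (hsub hz)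
    exact this.differentiableAt (hΩ.mem_nhds (hsub hz))
  have hRe : ∀ z ∈ ball z₀ δ, (p z).re - (p z₀).re ≤ 2 * M := by
    intro z hz
    have hconst := re_primitive_sub_const (convex_sq z₀ δ) (isOpen_sq z₀ δ) hUdiff hp
      (ball_subset_sq z₀ δ hz) (ball_subset_sq z₀ δ (mem_ball_self hδ))
    have h1 := hUb z (ball_subset_sq z₀ δ hz)
    have h2 := hUb z₀ (ball_subset_sq z₀ δ (mem_ball_self hδ))
    have h3 : (p z).re - (p z₀).re = U z - U z₀ := by linarith
    rw [h3]
    have h4 := abs_le.mp h1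
    have h5 := abs_le.mp h2
    linarith
  exact borel_caratheodory hδ hMpos hpball hRe


lemma chain_rule {U : ℂ → ℝ} (hU : ContDiffOn ℝ 2 U {z : ℂ | z ≠ 0})
    (γ : ℝ → ℂ) (t : ℝ) (γ' : ℂ) (hne : γ t ≠ 0) (hγ : HasDerivAt γ γ' t) :
    HasDerivAt (fun s => U (γ s)) ((cd U (γ t) * γ').re) t := by
  have hΩ : IsOpen {z : ℂ | z ≠ 0} := isOpen_ne
  have hdiff : DifferentiableAt ℝ U (γ t) :=
    ((hU.differentiableOn (by norm_num)) (γ t) hne).differentiableAt (hΩ.mem_nhds hne)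
  have h := hdiff.hasFDerivAt.comp_hasDerivAt t hγ
  rwa [fderiv_apply_eq U (γ t) γ'] at h

lemma main {U : ℂ → ℝ} {C μ : ℝ} (hC : 0 < C) (hμ : μ ∈ Set.Ioo (0:ℝ) 1)
    (hU : ContDiffOn ℝ 2 U {z : ℂ | z ≠ 0})
    (hharm : ∀ z ∈ {z : ℂ | z ≠ 0}, fderiv ℝ (fderiv ℝ U) z 1 1 +
      fderiv ℝ (fderiv ℝ U) z Complex.I Complex.I = 0)
    (hb : ∀ z : ℂ, z ≠ 0 → |U z| ≤ C * ‖z‖ ^ (-μ)) :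
    ∀ z : ℂ, z ≠ 0 → U z = 0 := by
  obtain ⟨hμ0, hμ1⟩ := hμ
  have hΩ : IsOpen {z : ℂ | z ≠ 0} := isOpen_ne
  have hf : DifferentiableOn ℂ (cd U) {z : ℂ | z ≠ 0} := cd_differentiableOn hΩ hU hharm
  set K : ℝ := 16 * 2 ^ μ * C with hK
  have hKpos : 0 < K := by positivity
  -- bound on F z = z * cd U z
  have hFb : ∀ z : ℂ, z ≠ 0 → ‖z * cd U z‖ ≤ K * ‖z‖ ^ (-μ) + 8 := by
    intro z hz
    have hn : 0 < ‖z‖ := norm_pos_iff.mpr hz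
    have h1 := cd_bound hC hμ0 hU hharm hb z hz
    have h2 : (‖z‖ / 2) ^ (-μ) = 2 ^ μ * ‖z‖ ^ (-μ) := by
      rw [Real.div_rpow (by positivity) (by norm_num : (0:ℝ) ≤ 2),
        Real.rpow_neg (by norm_num : (0:ℝ) ≤ 2)]
      rw [div_eq_mul_inv, inv_inv, mul_comm]
    rw [h2] at h1
    calc ‖z * cd U z‖ = ‖z‖ * ‖cd U z‖ := by rw [norm_mul]
      _ ≤ ‖z‖ * ((4 * (C * (2 ^ μ * ‖z‖ ^ (-μ))) + 2) / (‖z‖ / 4)) :=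
          mul_le_mul_of_nonneg_left h1 hn.le
      _ = (4 * (C * (2 ^ μ * ‖z‖ ^ (-μ))) + 2) * (‖z‖ / ‖z‖) * 4 := by
          rw [div_div_eq_mul_div]; ring
      _ = K * ‖z‖ ^ (-μ) + 8 := by rw [div_self hn.ne', hK]; ring
  set F : ℂ → ℂ := fun z => z * cd U z with hFdef
  have hFd : DifferentiableOn ℂ F (univ \ {0}) := by
    apply DifferentiableOn.mul differentiableOn_id
    exact hf.mono (by intro z hz; simpa using hz.2)
  -- removable singularity
  have hlittle : F =o[nhdsWithin 0 {(0:ℂ)}ᶜ] fun z => (z - 0)⁻¹ := by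
    rw [Asymptotics.isLittleO_iff]
    intro c hc
    have htend : Filter.Tendsto (fun z : ℂ => K * ‖z‖ ^ (1 - μ) + 8 * ‖z‖)
        (nhds 0) (nhds 0) := by
      have h1 : Filter.Tendsto (fun z : ℂ => ‖z‖) (nhds 0) (nhds 0) := by
        simpa using (continuous_norm (E := ℂ)).tendsto 0
      have h2 : Filter.Tendsto (fun r : ℝ => K * r ^ (1 - μ) + 8 * r) (nhds 0) (nhds 0) := by
        have h3 : ContinuousAt (fun r : ℝ => r ^ (1 - μ)) 0 :=
          Real.continuousAt_rpow_const 0 (1 - μ) (Or.inr (by linarith))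
        have h4 : Filter.Tendsto (fun r : ℝ => r ^ (1 - μ)) (nhds 0) (nhds 0) := by
          have := h3.tendsto
          rwa [Real.zero_rpow (by linarith : 1 - μ ≠ 0)] at this
        have := ((h4.const_mul K).add ((continuous_id.tendsto (0:ℝ)).const_mul (8:ℝ)))
        simpa using this
      exact h2.comp h1
    have hev := htend.eventually_lt_const hc
    have hev2 : ∀ᶠ z in nhdsWithin (0:ℂ) {(0:ℂ)}ᶜ,
        K * ‖z‖ ^ (1 - μ) + 8 * ‖z‖ < c ∧ z ≠ 0 := by
      refine Filter.Eventually.and (hev.filter_mono nhdsWithin_le_nhds) ?_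
      exact eventually_mem_nhdsWithin
    filter_upwards [hev2] with z hz
    obtain ⟨hz1, hz2⟩ := hz
    have hn : 0 < ‖z‖ := norm_pos_iff.mpr hz2
    rw [sub_zero, norm_inv, ← div_eq_mul_inv, le_div_iff₀ hn]
    calc ‖F z‖ * ‖z‖ ≤ (K * ‖z‖ ^ (-μ) + 8) * ‖z‖ :=
          mul_le_mul_of_nonneg_right (hFb z hz2) hn.le
      _ = K * ‖z‖ ^ (1 - μ) + 8 * ‖z‖ := by
          have hpow : ‖z‖ ^ (-μ) * ‖z‖ = ‖z‖ ^ (1 - μ) := by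
            have h9 := Real.rpow_add hn (-μ) 1
            rw [Real.rpow_one] at h9
            rw [← h9, neg_add_eq_sub]
          rw [← hpow]
          ring
      _ ≤ c := hz1.le
  have hF0 : F 0 = 0 := by simp [hFdef]
  have hupd := Complex.differentiableOn_update_limUnder_of_isLittleO
    (Filter.univ_mem) hFd (by simpa [hF0] using hlittle)
  set G : ℂ → ℂ := Function.update F 0 (Filter.limUnder (nhdsWithin 0 {(0:ℂ)}ᶜ) F) with hGdef
  have hG : Differentiable ℂ G := differentiableOn_univ.mp hupd
  -- G is bounded
  obtain ⟨C₂, hC₂⟩ := (isCompact_closedBall (0:ℂ) 1).exists_bound_of_continuousOn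
    hG.continuous.continuousOn
  have hbdd : Bornology.IsBounded (range G) := by
    refine isBounded_iff_forall_norm_le.mpr ⟨max C₂ (K + 8), ?_⟩
    rintro ξ ⟨z, rfl⟩
    by_cases hz : ‖z‖ ≤ 1
    · exact le_max_of_le_left (hC₂ z (mem_closedBall_zero_iff.mpr hz))
    · push_neg at hz
      have hz0 : z ≠ 0 := by intro h; rw [h, norm_zero] at hz; linarith
      have hGF : G z = F z := Function.update_of_ne hz0 _ _
      rw [hGF]
      refine le_max_of_le_right ?_
      have h8 := hFb z hz0
      have h9 : ‖z‖ ^ (-μ) ≤ 1 :=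
        Real.rpow_le_one_of_one_le_of_nonpos hz.le (by linarith)
      nlinarith
  have hconst : ∀ z : ℂ, G z = G 1 := fun z => hG.apply_eq_apply_of_bounded hbdd z 1
  set c₀ : ℂ := G 1 with hc₀
  have hcd : ∀ z : ℂ, z ≠ 0 → z * cd U z = c₀ := by
    intro z hz
    have h1 : G z = F z := Function.update_of_ne hz _ _
    have h2 := hconst z
    rw [h1] at h2
    exact h2
  have hcd' : ∀ z : ℂ, z ≠ 0 → cd U z = c₀ / z := by
    intro z hz
    rw [eq_div_iff hz, mul_comm]
    exact hcd z hz
  -- derivative helpers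
  have hofReal : ∀ t : ℝ, HasDerivAt (fun θ : ℝ => (θ : ℂ)) 1 t := by
    intro t
    simpa using (hasDerivAt_id t).ofReal_comp
  have hexpI : ∀ θ : ℝ, HasDerivAt (fun θ : ℝ => Complex.exp (θ * Complex.I))
      (Complex.exp (θ * Complex.I) * Complex.I) θ := by
    intro θ
    have h1 := (hofReal θ).mul_const Complex.I
    have h2 := h1.cexp
    simpa using h2
  have hexpR : ∀ t : ℝ, HasDerivAt (fun t : ℝ => Complex.exp (t : ℂ))
      (Complex.exp (t : ℂ)) t := by
    intro t
    have := (hofReal t).cexp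
    simpa using this
  -- imaginary part of c₀ vanishes
  have hIm : c₀.im = 0 := by
    have hder : ∀ θ : ℝ, HasDerivAt
        (fun θ : ℝ => U (Complex.exp (θ * Complex.I)) + c₀.im * θ) 0 θ := by
      intro θ
      have hne : Complex.exp ((θ:ℂ) * Complex.I) ≠ 0 := Complex.exp_ne_zero _
      have h2 := chain_rule hU _ θ _ hne (hexpI θ)
      rw [hcd' _ hne] at h2
      have h3 : (c₀ / Complex.exp ((θ:ℂ) * Complex.I) *
          (Complex.exp ((θ:ℂ) * Complex.I) * Complex.I)).re = -c₀.im := by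
        have h4 : c₀ / Complex.exp ((θ:ℂ) * Complex.I) *
            (Complex.exp ((θ:ℂ) * Complex.I) * Complex.I) = c₀ * Complex.I := by
          field_simp
        rw [h4]
        simp [Complex.mul_re]
      rw [h3] at h2
      have h4 : HasDerivAt (fun θ : ℝ => c₀.im * θ) c₀.im θ := by
        simpa using (hasDerivAt_id θ).const_mul c₀.im
      have h5 := h2.add h4
      exact h5.congr_deriv (by ring)
    have hconst2 := is_const_of_deriv_eq_zero
      (fun θ => (hder θ).differentiableAt) (fun θ => (hder θ).deriv) (2 * Real.pi) 0
    have he1 : Complex.exp (((2 * Real.pi : ℝ) : ℂ) * Complex.I) = 1 := by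
      push_cast
      exact Complex.exp_two_pi_mul_I
    have he0 : Complex.exp (((0:ℝ):ℂ) * Complex.I) = 1 := by norm_num
    rw [he1, he0] at hconst2
    have h6 : c₀.im * (2 * Real.pi) = 0 := by linarith
    rcases mul_eq_zero.mp h6 with h | h
    · exact h
    · exact absurd h (by positivity)
  -- along the real ray : U (exp t) = U 1 + c₀.re * t
  have hray : ∀ t : ℝ, U (Complex.exp ((t:ℝ):ℂ)) = U 1 + c₀.re * t := by
    have hder : ∀ t : ℝ, HasDerivAt
        (fun t : ℝ => U (Complex.exp ((t:ℝ):ℂ)) - c₀.re * t) 0 t := by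
      intro t
      have hne : Complex.exp ((t:ℝ):ℂ) ≠ 0 := Complex.exp_ne_zero _
      have h2 := chain_rule hU _ t _ hne (hexpR t)
      rw [hcd' _ hne] at h2
      have h3 : (c₀ / Complex.exp ((t:ℝ):ℂ) * Complex.exp ((t:ℝ):ℂ)).re = c₀.re := by
        rw [div_mul_cancel₀ _ hne]
      rw [h3] at h2
      have h4 : HasDerivAt (fun t : ℝ => c₀.re * t) c₀.re t := by
        simpa using (hasDerivAt_id t).const_mul c₀.re
      have h5 := h2.sub h4
      exact h5.congr_deriv (by ring)
    intro t
    have hconst3 := is_const_of_deriv_eq_zero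
      (fun s => (hder s).differentiableAt) (fun s => (hder s).deriv) t 0
    rw [Complex.ofReal_zero, Complex.exp_zero] at hconst3
    linarith
  -- bound along the ray
  have hrayb : ∀ t : ℝ, |U (Complex.exp ((t:ℝ):ℂ))| ≤ C * Real.exp (-μ * t) := by
    intro t
    have h := hb _ (Complex.exp_ne_zero ((t:ℝ):ℂ))
    have hnorm : ‖Complex.exp ((t:ℝ):ℂ)‖ = Real.exp t := by
      rw [Complex.norm_exp]
      simp
    rw [hnorm] at h
    have h2 : (Real.exp t) ^ (-μ) = Real.exp (-μ * t) := by
      rw [Real.rpow_def_of_pos (Real.exp_pos t), Real.log_exp]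
      ring_nf
    rwa [h2] at h
  -- real part of c₀ vanishes
  have hRe0 : c₀.re = 0 := by
    by_contra hre
    have habs : 0 < |c₀.re| := abs_pos.mpr hre
    set t₀ : ℝ := (C + |U 1| + 1) / |c₀.re| with ht₀
    have ht₀pos : 0 ≤ t₀ := by positivity
    have h1 := hrayb t₀
    rw [hray t₀] at h1
    have h2 : Real.exp (-μ * t₀) ≤ 1 := by
      rw [Real.exp_le_one_iff]
      nlinarith
    have hA1 : |U 1 + c₀.re * t₀| ≤ C := by
      calc |U 1 + c₀.re * t₀| ≤ C * Real.exp (-μ * t₀) := h1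
        _ ≤ C * 1 := mul_le_mul_of_nonneg_left h2 hC.le
        _ = C := mul_one C
    have h3 : |c₀.re * t₀| = C + |U 1| + 1 := by
      rw [abs_mul, _root_.abs_of_nonneg ht₀pos, ht₀]
      field_simp
    have l1 := le_abs_self (U 1 + c₀.re * t₀)
    have l2 := neg_abs_le (U 1 + c₀.re * t₀)
    have l3 := le_abs_self (U 1)
    have l4 := neg_abs_le (U 1)
    have h5 : |c₀.re * t₀| ≤ C + |U 1| := by
      rw [abs_le]
      constructor <;> linarith
    rw [h3] at h5
    linarith
  have hc0 : c₀ = 0 := by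
    apply Complex.ext <;> simp [hRe0, hIm]
  have hcd0 : ∀ z : ℂ, z ≠ 0 → cd U z = 0 := by
    intro z hz
    rw [hcd' z hz, hc0, zero_div]
  -- U 1 = 0
  have hU1 : U 1 = 0 := by
    by_contra h1
    have habs : 0 < |U 1| := abs_pos.mpr h1
    set L : ℝ := Real.log (|U 1| / C) with hL
    set t₀ : ℝ := max 0 ((-L)/μ + 1) with ht₀
    have h2 := hrayb t₀
    rw [hray t₀, hRe0, zero_mul, add_zero] at h2
    have h3 : -μ * t₀ < L := by
      have h4 : (-L)/μ + 1 ≤ t₀ := le_max_right _ _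
      have h5 : μ * ((-L)/μ + 1) ≤ μ * t₀ := mul_le_mul_of_nonneg_left h4 hμ0.le
      have h6 : μ * ((-L)/μ + 1) = -L + μ := by field_simp
      nlinarith
    have h6 : Real.exp (-μ * t₀) < |U 1| / C :=
      calc Real.exp (-μ * t₀) < Real.exp L := Real.exp_lt_exp.mpr h3
        _ = |U 1| / C := Real.exp_log (by positivity)
    have h7 : C * Real.exp (-μ * t₀) < C * (|U 1| / C) := by
      exact mul_lt_mul_of_pos_left h6 hC
    rw [mul_div_cancel₀ _ hC.ne'] at h7
    linarith
  -- conclusion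
  intro z hz
  have hr : 0 < ‖z‖ := norm_pos_iff.mpr hz
  have hcirc : U z = U ((‖z‖ : ℝ) : ℂ) := by
    have hder : ∀ θ : ℝ, HasDerivAt
        (fun θ : ℝ => U (((‖z‖ : ℝ):ℂ) * Complex.exp (θ * Complex.I))) 0 θ := by
      intro θ
      have hne : ((‖z‖ : ℝ):ℂ) * Complex.exp ((θ:ℂ) * Complex.I) ≠ 0 :=
        mul_ne_zero (by exact_mod_cast hr.ne') (Complex.exp_ne_zero _)
      have hγ := (hexpI θ).const_mul ((‖z‖ : ℝ):ℂ)
      have h2 := chain_rule hU _ θ _ hne hγ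
      rw [hcd0 _ hne] at h2
      simpa using h2
    have hconst4 := is_const_of_deriv_eq_zero
      (fun θ => (hder θ).differentiableAt) (fun θ => (hder θ).deriv) (Complex.arg z) 0
    rw [Complex.ofReal_zero, zero_mul, Complex.exp_zero, mul_one] at hconst4
    have habsarg : ((‖z‖ : ℝ):ℂ) * Complex.exp ((Complex.arg z : ℂ) * Complex.I) = z :=
      Complex.norm_mul_exp_arg_mul_I z
    rw [habsarg] at hconst4
    exact hconst4
  rw [hcirc]
  have hlog : ((‖z‖ : ℝ) : ℂ) = Complex.exp ((Real.log (‖z‖) : ℝ) : ℂ) := by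
    rw [← Complex.ofReal_exp, Real.exp_log hr]
  rw [hlog, hray, hRe0, hU1]
  ring



end Stmt6Aux
end

/-- A real-valued function is harmonic on a set `s ⊆ ℝⁿ` if it is C² there and the sum of
its pure second partial derivatives (computed within `s`) vanishes at every point of `s`. -/
def IsHarmonicOnEuc {n : ℕ} (u : EuclideanSpace ℝ (Fin n) → ℝ)
    (s : Set (EuclideanSpace ℝ (Fin n))) : Prop :=
  ContDiffOn ℝ 2 u s ∧
    ∀ x ∈ s, ∑ i : Fin n, iteratedFDerivWithin ℝ 2 u s x
      ![EuclideanSpace.single i 1, EuclideanSpace.single i 1] = 0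

theorem stmt_6 (u : EuclideanSpace ℝ (Fin 2) → ℝ)
    (hu : IsHarmonicOnEuc u ({0}ᶜ : Set (EuclideanSpace ℝ (Fin 2))))
    (C : ℝ) (hC : 0 < C) (μ : ℝ) (hμ : μ ∈ Set.Ioo (0 : ℝ) 1)
    (hbound : ∀ x : EuclideanSpace ℝ (Fin 2), x ≠ 0 → |u x| ≤ C * ‖x‖ ^ (-μ)) :
    ∀ x : EuclideanSpace ℝ (Fin 2), x ≠ 0 → u x = 0 := by
  intro x hx
  set e := Complex.orthonormalBasisOneI.repr with he
  set U : ℂ → ℝ := fun z => u (e z) with hUdef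
  set g : EuclideanSpace ℝ (Fin 2) ≃L[ℝ] ℂ := e.symm.toContinuousLinearEquiv with hg
  have hgapp : ∀ y, g y = e.symm y := fun y => rfl
  have hge : ∀ z : ℂ, g (e z) = z := fun z => by rw [hgapp]; exact e.symm_apply_apply z
  have hΩ : IsOpen {z : ℂ | z ≠ 0} := isOpen_ne
  have hgzero : ∀ y, g y = 0 ↔ y = 0 := by
    intro y; rw [hgapp]; exact e.symm.map_eq_zero_iff
  have hgpre : g ⁻¹' {z : ℂ | z ≠ 0} = ({0}ᶜ : Set (EuclideanSpace ℝ (Fin 2))) := by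
    ext y
    simp only [mem_preimage, mem_setOf_eq, mem_compl_iff, mem_singleton_iff]
    exact not_congr (hgzero y)
  have hcomp : u = U ∘ g := by
    funext y
    simp only [hUdef, Function.comp_apply, hgapp]
    rw [e.apply_symm_apply]
  have hezero : ∀ z : ℂ, z ≠ 0 → e z ≠ 0 := by
    intro z hz h0
    exact hz (by rwa [e.map_eq_zero_iff] at h0)
  -- C² of U
  have hU : ContDiffOn ℝ 2 U {z : ℂ | z ≠ 0} := by
    apply hu.1.comp (e.contDiff.contDiffOn)
    intro z hz
    exact hezero z hz
  -- harmonicity of U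
  have hharm : ∀ z ∈ {z : ℂ | z ≠ 0}, fderiv ℝ (fderiv ℝ U) z 1 1 +
      fderiv ℝ (fderiv ℝ U) z Complex.I Complex.I = 0 := by
    intro z hz
    have hz' : z ≠ 0 := hz
    have hx' : e z ∈ ({0}ᶜ : Set (EuclideanSpace ℝ (Fin 2))) := hezero z hz'
    have h0 := hu.2 (e z) hx'
    have hudd : UniqueDiffOn ℝ {w : ℂ | w ≠ 0} := hΩ.uniqueDiffOn
    have hrw : ∀ i : Fin 2,
        iteratedFDerivWithin ℝ 2 u ({0}ᶜ) (e z)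
          ![EuclideanSpace.single i 1, EuclideanSpace.single i 1] =
        fderiv ℝ (fderiv ℝ U) z (g (EuclideanSpace.single i 1)) (g (EuclideanSpace.single i 1)) := by
      intro i
      have hcr := g.iteratedFDerivWithin_comp_right U hudd
        (x := e z) (by rw [hge]; exact hz) 2
      rw [hgpre] at hcr
      rw [hcomp, hcr]
      rw [ContinuousMultilinearMap.compContinuousLinearMap_apply]
      rw [hge]
      rw [iteratedFDerivWithin_of_isOpen 2 hΩ hz]
      rw [iteratedFDeriv_two_apply]
      simp
    rw [Fin.sum_univ_two, hrw 0, hrw 1] at h0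
    have hg0 : g (EuclideanSpace.single (0 : Fin 2) 1) = 1 := by
      rw [hgapp, he]
      rw [Complex.orthonormalBasisOneI_repr_symm_apply]
      simp [EuclideanSpace.single_apply]
    have hg1 : g (EuclideanSpace.single (1 : Fin 2) 1) = Complex.I := by
      rw [hgapp, he]
      rw [Complex.orthonormalBasisOneI_repr_symm_apply]
      simp [EuclideanSpace.single_apply]
    rwa [hg0, hg1] at h0
  -- bound
  have hb' : ∀ z : ℂ, z ≠ 0 → |U z| ≤ C * ‖z‖ ^ (-μ) := by
    intro z hz
    have := hbound (e z) (hezero z hz)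
    rwa [e.norm_map] at this
  have hmain := Stmt6Aux.main hC hμ hU hharm hb' (g x) (by rw [Ne, hgzero]; exact hx)
  have : U (g x) = u x := by
    rw [hUdef]
    simp only [hgapp]
    rw [e.apply_symm_apply]
  rwa [this] at hmain
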